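/- Let L̄ be a symmetric positive semidefinite N×N matrix with λ₂(L̄) > 0, let h₁,…,h_N : ℝ^M → ℝ^M be Lipschitz with constant K, let h = (1/N)Σₙ hₙ satisfy (θ−θ')ᵀ(h(θ)−h(θ')) ≥ γ‖θ−θ'‖² for some γ > 0, and fix θ* ∈ ℝ^M. Define R(x) = −[β(L̄⊗I_M)(x − 1_N⊗θ*) + (M(x) − M(1_N⊗θ*))] where M(x) = (h₁(x₁),…,h_N(x_N)) and V(x) = ‖x − 1_N⊗θ*‖². If β > (K² + Kγ)/(γ λ₂(L̄)), then ⟨R(x), ∇V(x)⟩ ≤ 0 for all x ∈ ℝ^{NM}, with equality only at x = 1_N⊗θ*. -/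

import Mathlib

open Matrix Kronecker

private lemma dot_self_nonneg' {n : Type*} [Fintype n] (v : n → ℝ) : 0 ≤ v ⬝ᵥ v :=
  Finset.sum_nonneg fun i _ => mul_self_nonneg (v i)

private lemma cross_bound' {n : Type*} [Fintype n] (u v : n → ℝ) (C t : ℝ) (ht : 0 < t)
    (hC : u ⬝ᵥ u ≤ C) : -(C / t + t * (v ⬝ᵥ v)) / 2 ≤ u ⬝ᵥ v := by
  have h0 : 0 ≤ (u + t • v) ⬝ᵥ (u + t • v) := dot_self_nonneg' _
  have hexp : (u + t • v) ⬝ᵥ (u + t • v)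
      = u ⬝ᵥ u + 2 * t * (u ⬝ᵥ v) + t ^ 2 * (v ⬝ᵥ v) := by
    simp only [add_dotProduct, dotProduct_add, smul_dotProduct, dotProduct_smul,
      smul_eq_mul, dotProduct_comm v u]
    ring
  have h1 : C / t * t = C := div_mul_cancel₀ C (ne_of_gt ht)
  nlinarith [h0, hC, ht]

private lemma kron_quad' {N M : ℕ} (L : Matrix (Fin N) (Fin N) ℝ) (v : Fin N × Fin M → ℝ) :
    v ⬝ᵥ (L ⊗ₖ (1 : Matrix (Fin M) (Fin M) ℝ)).mulVec v
      = ∑ m, (fun n => v (n, m)) ⬝ᵥ L.mulVec (fun n => v (n, m)) := by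
  simp only [dotProduct, Matrix.mulVec, Fintype.sum_prod_type, Matrix.kroneckerMap_apply,
    Matrix.one_apply, mul_ite, mul_one, mul_zero, ite_mul, zero_mul,
    Finset.sum_ite_eq, Finset.mem_univ, if_true, Finset.mul_sum]
  rw [Finset.sum_comm]

private lemma dot_sum' {m : Type*} {ι : Type*} [Fintype m] (s : Finset ι) (v : m → ℝ)
    (f : ι → m → ℝ) : v ⬝ᵥ (∑ i ∈ s, f i) = ∑ i ∈ s, v ⬝ᵥ f i := by
  simp only [dotProduct, Finset.sum_apply, Finset.mul_sum]
  exact Finset.sum_comm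

set_option maxHeartbeats 1000000 in
/-- Drift condition for the `NU` algorithm under strict monotonicity of `h`:
with `R(x) = −[β(L̄⊗I_M)(x − 1⊗θ*) + (M(x) − M(1⊗θ*))]` and `V(x) = ‖x − 1⊗θ*‖²`,
if each `hₙ` is `K`-Lipschitz, `h = (1/N)∑ hₙ` is `γ`-strictly monotone and
`β > (K² + Kγ)/(γ lam2(L̄))`, then `⟨R(x), ∇V(x)⟩ ≤ 0` with equality only at `x = 1⊗θ*`. -/
theorem nu_drift_condition {N M : ℕ}
    (L : Matrix (Fin N) (Fin N) ℝ) (hsym : L.IsSymm) (hpsd : L.PosSemidef)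
    (hone : L.mulVec (fun _ => 1) = 0)
    (lam2 : ℝ) (hlam2 : 0 < lam2)
    (hspec : ∀ y : Fin N → ℝ, (∑ n, y n) = 0 → lam2 * (y ⬝ᵥ y) ≤ y ⬝ᵥ L.mulVec y)
    (h : Fin N → (Fin M → ℝ) → (Fin M → ℝ))
    (K : ℝ) (hK : 0 ≤ K)
    (hLip : ∀ n θ θ', (h n θ - h n θ') ⬝ᵥ (h n θ - h n θ') ≤ K ^ 2 * ((θ - θ') ⬝ᵥ (θ - θ')))
    (γ : ℝ) (hγ : 0 < γ)
    (hstr : ∀ θ θ' : Fin M → ℝ,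
      γ * ((θ - θ') ⬝ᵥ (θ - θ')) ≤
        (θ - θ') ⬝ᵥ (((N : ℝ)⁻¹ • ∑ n, h n θ) - ((N : ℝ)⁻¹ • ∑ n, h n θ')))
    (θs : Fin M → ℝ) (β : ℝ) (hβ : (K ^ 2 + K * γ) / (γ * lam2) < β) :
    ∀ x : Fin N × Fin M → ℝ,
      let ones : Fin N × Fin M → ℝ := fun p => θs p.2
      let Mm : (Fin N × Fin M → ℝ) → (Fin N × Fin M → ℝ) :=
        fun z p => h p.1 (fun i => z (p.1, i)) p.2
      let R : Fin N × Fin M → ℝ :=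
        -(β • ((L ⊗ₖ (1 : Matrix (Fin M) (Fin M) ℝ)).mulVec (x - ones)) + (Mm x - Mm ones))
      R ⬝ᵥ ((2 : ℝ) • (x - ones)) ≤ 0 ∧
        (R ⬝ᵥ ((2 : ℝ) • (x - ones)) = 0 → x = ones) := by
  intro x ones Mm R
  -- degenerate cases
  rcases Nat.eq_zero_or_pos N with hN0 | hNpos
  · subst hN0
    haveI : IsEmpty (Fin 0 × Fin M) := ⟨fun p => p.1.elim0⟩
    constructor
    · simp [dotProduct]
    · intro _; funext p; exact p.1.elim0
  rcases Nat.eq_zero_or_pos M with hM0 | hMpos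
  · subst hM0
    haveI : IsEmpty (Fin N × Fin 0) := ⟨fun p => p.2.elim0⟩
    constructor
    · simp [dotProduct]
    · intro _; funext p; exact p.2.elim0
  -- K must be positive
  have hKpos : 0 < K := by
    rcases hK.lt_or_eq with hlt | heq
    · exact hlt
    exfalso
    have hc : ∀ n (θ θ' : Fin M → ℝ), h n θ = h n θ' := by
      intro n θ θ'
      have h1 := hLip n θ θ'
      rw [← heq] at h1
      have h1' : (h n θ - h n θ') ⬝ᵥ (h n θ - h n θ') ≤ 0 := by linarith
      have h2 : (h n θ - h n θ') ⬝ᵥ (h n θ - h n θ') = 0 :=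
        le_antisymm h1' (dot_self_nonneg' _)
      exact sub_eq_zero.mp (dotProduct_self_eq_zero.mp h2)
    have h3 := hstr (fun _ => 1) 0
    have h4 : (∑ n, h n (fun _ => 1)) = ∑ n, h n 0 :=
      Finset.sum_congr rfl fun n _ => hc n _ _
    simp only [h4, sub_self, dotProduct_zero] at h3
    have h5 : (((fun _ => (1:ℝ)) : Fin M → ℝ) - 0) ⬝ᵥ (((fun _ => (1:ℝ)) : Fin M → ℝ) - 0) = (M : ℝ) := by
      simp [dotProduct]
    rw [h5] at h3
    have hM1 : (1:ℝ) ≤ (M:ℝ) := by exact_mod_cast hMpos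
    nlinarith
  -- constants
  have hNR : (0:ℝ) < (N:ℝ) := by exact_mod_cast hNpos
  have hNne : (N:ℝ) ≠ 0 := ne_of_gt hNR
  have hlg : 0 < γ * lam2 := mul_pos hγ hlam2
  have hβ' : K ^ 2 + K * γ < β * (γ * lam2) := (div_lt_iff₀ hlg).mp hβ
  have hβpos : 0 < β := by nlinarith [sq_nonneg K, mul_pos hKpos hγ]
  have hBK : K ^ 2 / γ < β * lam2 - K := by
    rw [div_lt_iff₀ hγ]; nlinarith
  have hK2γ : 0 < K ^ 2 / γ := div_pos (pow_pos hKpos 2) hγ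
  have hBpos : 0 < β * lam2 - K := lt_trans hK2γ hBK
  set B : ℝ := β * lam2 - K with hBdef
  have hden : 0 < B + K ^ 2 / γ := by linarith
  set t : ℝ := 2 * K ^ 2 / (B + K ^ 2 / γ) with htdef
  have htpos : 0 < t := div_pos (by positivity) hden
  have htγ : t < γ := by
    rw [htdef, div_lt_iff₀ hden]
    have h1 : K ^ 2 < B * γ := (div_lt_iff₀ hγ).mp hBK
    have h2 : γ * (K ^ 2 / γ) = K ^ 2 := mul_div_cancel₀ _ (ne_of_gt hγ)
    nlinarith
  have htK : K ^ 2 / t = (B + K ^ 2 / γ) / 2 := by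
    rw [htdef]
    field_simp
  have htKB : K ^ 2 / t < B := by rw [htK]; linarith
  -- decomposition into consensus and orthogonal parts
  set ybar : Fin M → ℝ := fun m => (N:ℝ)⁻¹ * ∑ n, (x (n, m) - θs m) with hydef
  set zv : Fin N → Fin M → ℝ := fun n m => x (n, m) - θs m - ybar m with hzdef
  have hcolsum : ∀ m, (∑ n, zv n m) = 0 := by
    intro m
    have h1 : (∑ n, zv n m) = (∑ n, (x (n, m) - θs m)) - (N:ℝ) * ybar m := by
      simp only [hzdef, Finset.sum_sub_distrib, Finset.sum_const, Finset.card_univ,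
        Fintype.card_fin, nsmul_eq_mul]
    rw [h1, hydef]
    field_simp
    ring
  -- quadratic form bound
  have hQL2 : ∀ m : Fin M, (fun n => (x - ones) (n, m)) ⬝ᵥ L.mulVec (fun n => (x - ones) (n, m))
      = (fun n => zv n m) ⬝ᵥ L.mulVec (fun n => zv n m) := by
    intro m
    have hcol : (fun n => (x - ones) (n, m)) = (fun n => zv n m) + ybar m • (fun _ => (1:ℝ)) := by
      funext n
      show x (n, m) - θs m = zv n m + ybar m • (1:ℝ)
      simp only [hzdef, smul_eq_mul, mul_one]
      ring
    rw [hcol, Matrix.mulVec_add, Matrix.mulVec_smul, hone, smul_zero, add_zero,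
      add_dotProduct, smul_dotProduct]
    have h10 : (fun _ => (1:ℝ)) ⬝ᵥ L.mulVec (fun n => zv n m) = 0 := by
      rw [dotProduct_mulVec, ← hsym.eq, vecMul_transpose, hone, zero_dotProduct]
    rw [h10, smul_zero, add_zero]
  have hZswap : (∑ n, zv n ⬝ᵥ zv n) = ∑ m, (fun n => zv n m) ⬝ᵥ (fun n => zv n m) := by
    simp only [dotProduct]
    exact Finset.sum_comm
  have hQLge : lam2 * (∑ n, zv n ⬝ᵥ zv n)
      ≤ (x - ones) ⬝ᵥ (L ⊗ₖ (1 : Matrix (Fin M) (Fin M) ℝ)).mulVec (x - ones) := by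
    rw [kron_quad' L (x - ones), Finset.sum_congr rfl fun m _ => hQL2 m, hZswap,
      Finset.mul_sum]
    exact Finset.sum_le_sum fun m _ => hspec _ (hcolsum m)
  -- monotone / Lipschitz part
  set xr : Fin N → Fin M → ℝ := fun n i => x (n, i) with hxrdef
  set d1 : Fin N → Fin M → ℝ := fun n => h n (xr n) - h n (θs + ybar) with hd1def
  set d2 : Fin N → Fin M → ℝ := fun n => h n (θs + ybar) - h n θs with hd2def
  have hDe_eq : (Mm x - Mm ones) ⬝ᵥ (x - ones)
      = ∑ n, (h n (xr n) - h n θs) ⬝ᵥ (xr n - θs) := by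
    simp only [dotProduct, Fintype.sum_prod_type, Pi.sub_apply]
    rfl
  have hybz : ∀ n, xr n - θs = ybar + zv n := by
    intro n; funext m
    show x (n, m) - θs m = ybar m + zv n m
    simp only [hzdef]
    ring
  have hsplit : ∀ n, (h n (xr n) - h n θs) ⬝ᵥ (xr n - θs)
      = d2 n ⬝ᵥ ybar + (d1 n ⬝ᵥ ybar + d1 n ⬝ᵥ zv n + d2 n ⬝ᵥ zv n) := by
    intro n
    have h1 : h n (xr n) - h n θs = d1 n + d2 n := (sub_add_sub_cancel _ _ _).symm
    rw [h1, hybz n, add_dotProduct, dotProduct_add, dotProduct_add]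
    ring
  have hd1b : ∀ n, d1 n ⬝ᵥ d1 n ≤ K ^ 2 * (zv n ⬝ᵥ zv n) := by
    intro n
    have h1 := hLip n (xr n) (θs + ybar)
    have h2 : xr n - (θs + ybar) = zv n := by
      funext m
      show x (n, m) - (θs m + ybar m) = zv n m
      simp only [hzdef]
      ring
    rwa [h2] at h1
  have hd2b : ∀ n, d2 n ⬝ᵥ d2 n ≤ K ^ 2 * (ybar ⬝ᵥ ybar) := by
    intro n
    have h1 := hLip n (θs + ybar) θs
    rwa [add_sub_cancel_left] at h1
  have hmono : (N:ℝ) * (γ * (ybar ⬝ᵥ ybar)) ≤ ∑ n, d2 n ⬝ᵥ ybar := by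
    have h0 := hstr (θs + ybar) θs
    rw [add_sub_cancel_left] at h0
    have h1 : ybar ⬝ᵥ ((N:ℝ)⁻¹ • ∑ n, h n (θs + ybar) - (N:ℝ)⁻¹ • ∑ n, h n θs)
        = (N:ℝ)⁻¹ * ∑ n, d2 n ⬝ᵥ ybar := by
      rw [← smul_sub, ← Finset.sum_sub_distrib, dotProduct_smul, smul_eq_mul]
      congr 1
      rw [dot_sum']
      exact Finset.sum_congr rfl fun n _ => dotProduct_comm _ _
    rw [h1] at h0
    have h2 := mul_le_mul_of_nonneg_left h0 (le_of_lt hNR)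
    calc (N:ℝ) * (γ * (ybar ⬝ᵥ ybar)) ≤ (N:ℝ) * ((N:ℝ)⁻¹ * ∑ n, d2 n ⬝ᵥ ybar) := h2
      _ = ∑ n, d2 n ⬝ᵥ ybar := by field_simp
  have hcross : ∀ n, -((K ^ 2 / t + K) * (zv n ⬝ᵥ zv n) + t * (ybar ⬝ᵥ ybar))
      ≤ d1 n ⬝ᵥ ybar + d1 n ⬝ᵥ zv n + d2 n ⬝ᵥ zv n := by
    intro n
    have c1 := cross_bound' (d1 n) ybar (K ^ 2 * (zv n ⬝ᵥ zv n)) t htpos (hd1b n)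
    have c2 := cross_bound' (d1 n) (zv n) (K ^ 2 * (zv n ⬝ᵥ zv n)) K hKpos (hd1b n)
    have c3 := cross_bound' (d2 n) (zv n) (K ^ 2 * (ybar ⬝ᵥ ybar)) (K ^ 2 / t)
      (div_pos (pow_pos hKpos 2) htpos) (hd2b n)
    have e1 : K ^ 2 * (zv n ⬝ᵥ zv n) / t = K ^ 2 / t * (zv n ⬝ᵥ zv n) := by ring
    have e2 : K ^ 2 * (zv n ⬝ᵥ zv n) / K = K * (zv n ⬝ᵥ zv n) := by
      field_simp
    have e3 : K ^ 2 * (ybar ⬝ᵥ ybar) / (K ^ 2 / t) = t * (ybar ⬝ᵥ ybar) := by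
      rw [div_div_eq_mul_div, mul_comm (K ^ 2 * (ybar ⬝ᵥ ybar)) t, mul_div_assoc,
        mul_div_assoc]
      congr 1
      field_simp
    rw [e1] at c1
    rw [e2] at c2
    rw [e3] at c3
    linarith [c1, c2, c3]
  have hcrosssum : -((K ^ 2 / t + K) * (∑ n, zv n ⬝ᵥ zv n) + (N:ℝ) * (t * (ybar ⬝ᵥ ybar)))
      ≤ ∑ n, (d1 n ⬝ᵥ ybar + d1 n ⬝ᵥ zv n + d2 n ⬝ᵥ zv n) := by
    have h1 := Finset.sum_le_sum fun n (_ : n ∈ Finset.univ) => hcross n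
    have h2 : ∑ n : Fin N, -((K ^ 2 / t + K) * (zv n ⬝ᵥ zv n) + t * (ybar ⬝ᵥ ybar))
        = -((K ^ 2 / t + K) * (∑ n, zv n ⬝ᵥ zv n) + (N:ℝ) * (t * (ybar ⬝ᵥ ybar))) := by
      rw [Finset.sum_neg_distrib, Finset.sum_add_distrib, ← Finset.mul_sum,
        Finset.sum_const, Finset.card_univ, Fintype.card_fin, nsmul_eq_mul]
    rw [← h2]
    exact h1
  have hDege : (N:ℝ) * (γ * (ybar ⬝ᵥ ybar))
      - ((K ^ 2 / t + K) * (∑ n, zv n ⬝ᵥ zv n) + (N:ℝ) * (t * (ybar ⬝ᵥ ybar)))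
      ≤ (Mm x - Mm ones) ⬝ᵥ (x - ones) := by
    rw [hDe_eq]
    have h1 : ∑ n, (h n (xr n) - h n θs) ⬝ᵥ (xr n - θs)
        = (∑ n, d2 n ⬝ᵥ ybar) + ∑ n, (d1 n ⬝ᵥ ybar + d1 n ⬝ᵥ zv n + d2 n ⬝ᵥ zv n) := by
      rw [← Finset.sum_add_distrib]
      exact Finset.sum_congr rfl fun n _ => hsplit n
    rw [h1]
    linarith [hmono, hcrosssum]
  have hTeq : R ⬝ᵥ ((2:ℝ) • (x - ones))
      = -(2 * (β * ((x - ones) ⬝ᵥ (L ⊗ₖ (1 : Matrix (Fin M) (Fin M) ℝ)).mulVec (x - ones))))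
        - 2 * ((Mm x - Mm ones) ⬝ᵥ (x - ones)) := by
    show (-(β • ((L ⊗ₖ (1 : Matrix (Fin M) (Fin M) ℝ)).mulVec (x - ones)) + (Mm x - Mm ones)))
        ⬝ᵥ ((2:ℝ) • (x - ones)) = _
    rw [neg_dotProduct, add_dotProduct, smul_dotProduct, dotProduct_smul, dotProduct_smul,
      dotProduct_comm ((L ⊗ₖ (1 : Matrix (Fin M) (Fin M) ℝ)).mulVec (x - ones)) (x - ones)]
    simp only [smul_eq_mul]
    ring
  have hmain : R ⬝ᵥ ((2:ℝ) • (x - ones))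
      ≤ -((2 * B - 2 * (K ^ 2 / t)) * (∑ n, zv n ⬝ᵥ zv n))
        - ((2 * γ - 2 * t) * ((N:ℝ) * (ybar ⬝ᵥ ybar))) := by
    rw [hTeq, hBdef]
    have m1 : β * (lam2 * (∑ n, zv n ⬝ᵥ zv n))
        ≤ β * ((x - ones) ⬝ᵥ (L ⊗ₖ (1 : Matrix (Fin M) (Fin M) ℝ)).mulVec (x - ones)) :=
      mul_le_mul_of_nonneg_left hQLge (le_of_lt hβpos)
    nlinarith [m1, hDege]
  have hZnn : (0:ℝ) ≤ ∑ n, zv n ⬝ᵥ zv n := Finset.sum_nonneg fun n _ => dot_self_nonneg' _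
  have hYnn : (0:ℝ) ≤ ybar ⬝ᵥ ybar := dot_self_nonneg' _
  have hc1 : 0 ≤ (2 * B - 2 * (K ^ 2 / t)) * (∑ n, zv n ⬝ᵥ zv n) :=
    mul_nonneg (by linarith [htKB]) hZnn
  have hc2 : 0 ≤ (2 * γ - 2 * t) * ((N:ℝ) * (ybar ⬝ᵥ ybar)) :=
    mul_nonneg (by linarith) (mul_nonneg hNR.le hYnn)
  constructor
  · linarith [hmain, hc1, hc2]
  · intro heq
    rw [heq] at hmain
    have hZ0 : (∑ n, zv n ⬝ᵥ zv n) = 0 := by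
      by_contra hne
      have hZpos : 0 < ∑ n, zv n ⬝ᵥ zv n := lt_of_le_of_ne hZnn (Ne.symm hne)
      have := mul_pos (show (0:ℝ) < 2 * B - 2 * (K ^ 2 / t) by linarith [htKB]) hZpos
      linarith [hmain, hc2]
    have hY0 : (ybar ⬝ᵥ ybar) = 0 := by
      by_contra hne
      have hYpos : 0 < ybar ⬝ᵥ ybar := lt_of_le_of_ne hYnn (Ne.symm hne)
      have := mul_pos (show (0:ℝ) < 2 * γ - 2 * t by linarith) (mul_pos hNR hYpos)
      linarith [hmain, hc1]
    have hzv0 : ∀ n, zv n = 0 := by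
      intro n
      have hsum := (Finset.sum_eq_zero_iff_of_nonneg
        fun n (_ : n ∈ Finset.univ) => dot_self_nonneg' (zv n)).mp hZ0
      exact dotProduct_self_eq_zero.mp (hsum n (Finset.mem_univ n))
    have hyb0 : ybar = 0 := dotProduct_self_eq_zero.mp hY0
    funext p
    obtain ⟨n, m⟩ := p
    have e1 : x (n, m) - θs m - ybar m = 0 := by
      have h1 := congrFun (hzv0 n) m
      simpa only [hzdef, Pi.zero_apply] using h1
    have e2 : ybar m = 0 := congrFun hyb0 m
    show x (n, m) = θs m
    linarith [e1, e2]
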